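/- Let g be a finite-dimensional complex Lie algebra with property F: every basis contains a triple (x₁,x₂,x₃) such that for all i ≠ j in {1,2,3}, [xᵢ,[xᵢ,xⱼ]] ≠ 0 or [xⱼ,[xⱼ,xᵢ]] ≠ 0. Then g admits no periodic prederivation. -/

import Mathlib

/-- A prederivation of a Lie algebra. -/
def IsPrederivation {L : Type*} [LieRing L] [LieAlgebra ℂ L] (P : L →ₗ[ℂ] L) : Prop :=
  ∀ x y z : L, P ⁅x, ⁅y, z⁆⁆ = ⁅P x, ⁅y, z⁆⁆ + ⁅x, ⁅P y, z⁆⁆ + ⁅x, ⁅y, P z⁆⁆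

lemma key_complex {α β : ℂ} (hα : ‖α‖ = 1) (hβ : ‖β‖ = 1)
    (h : ‖2 * α + β‖ = 1) : β = -α := by
  have q1 := Complex.sq_norm α
  have q2 := Complex.sq_norm β
  have q3 := Complex.sq_norm (2 * α + β)
  rw [hα, Complex.normSq_apply] at q1
  rw [hβ, Complex.normSq_apply] at q2
  rw [h, Complex.normSq_apply] at q3
  have hre : (2 * α + β).re = 2 * α.re + β.re := by simp
  have him : (2 * α + β).im = 2 * α.im + β.im := by simp
  rw [hre, him] at q3
  norm_num at q1 q2 q3
  have h4 : α.re * β.re + α.im * β.im = -1 := by nlinarith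
  have h5 : (α.re * β.im - α.im * β.re) ^ 2 = 0 := by nlinarith
  have h6 : α.re * β.im = α.im * β.re := by
    have := pow_eq_zero_iff (n := 2) (by norm_num) |>.mp h5
    linarith [sub_eq_zero.mp this]
  apply Complex.ext
  · simp only [Complex.neg_re]; nlinarith
  · simp only [Complex.neg_im]; nlinarith

theorem no_periodic_prederivation_of_propertyF (L : Type*) [LieRing L]
    [LieAlgebra ℂ L] [FiniteDimensional ℂ L]
    (hF : ∀ (ι : Type) (b : Module.Basis ι ℂ L), ∃ i j k : ι, i ≠ j ∧ i ≠ k ∧ j ≠ k ∧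
      (⁅b i, ⁅b i, b j⁆⁆ ≠ 0 ∨ ⁅b j, ⁅b j, b i⁆⁆ ≠ 0) ∧
      (⁅b i, ⁅b i, b k⁆⁆ ≠ 0 ∨ ⁅b k, ⁅b k, b i⁆⁆ ≠ 0) ∧
      (⁅b j, ⁅b j, b k⁆⁆ ≠ 0 ∨ ⁅b k, ⁅b k, b j⁆⁆ ≠ 0)) :
    ¬ ∃ P : L →ₗ[ℂ] L, IsPrederivation P ∧ ∃ m : ℕ, 1 ≤ m ∧ P ^ m = 1 := by
  rintro ⟨P, hP, m, hm, hPm⟩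
  let Q : Module.End ℂ L := P
  have hQ : ∀ x, Q x = P x := fun _ => rfl
  have hQm : Q ^ m = 1 := hPm
  -- P is semisimple
  have hsf : Squarefree (Polynomial.X ^ m - Polynomial.C (1 : ℂ)) := by
    apply Polynomial.Separable.squarefree
    apply Polynomial.separable_X_pow_sub_C
    · exact_mod_cast Nat.one_le_iff_ne_zero.mp hm
    · exact one_ne_zero
  have haev : Polynomial.aeval Q (Polynomial.X ^ m - Polynomial.C (1:ℂ)) = 0 := by
    simp [hQm]
  have hss : Q.IsSemisimple :=
    Module.End.isSemisimple_of_squarefree_aeval_eq_zero hsf haev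
  -- eigenvalue fact: every eigenvalue has modulus one
  have heig : ∀ (μ : ℂ) (v : L), v ≠ 0 → P v = μ • v → ‖μ‖ = 1 := by
    intro μ v hv hμ
    have hpow : ∀ n : ℕ, (P ^ n) v = μ ^ n • v := by
      intro n
      induction n with
      | zero => simp
      | succ n ih =>
        rw [pow_succ, Module.End.mul_apply, hμ, map_smul, ih, smul_smul]
        congr 1
        ring
    have : μ ^ m • v = v := by rw [← hpow, hPm]; simp
    have hμm : μ ^ m = 1 := by
      by_contra hne
      have : (μ ^ m - 1) • v = 0 := by rw [sub_smul, this, one_smul, sub_self]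
      rcases smul_eq_zero.mp this with h | h
      · exact hne (by linear_combination h)
      · exact hv h
    have : ‖μ‖ ^ m = 1 := by
      rw [← norm_pow, hμm, norm_one]
    rcases pow_eq_one_iff_cases.mp this with h | h | h
    · omega
    · exact h
    · exfalso; nlinarith [norm_nonneg μ, h.1]
  -- eigenbasis
  have htop : ⨆ μ : ℂ, Q.eigenspace μ = ⊤ := by
    have heq : ∀ μ, Q.eigenspace μ = Q.maxGenEigenspace μ :=
      fun μ => (hss.isFinitelySemisimple.maxGenEigenspace_eq_eigenspace μ).symm
    simp_rw [heq]
    exact Module.End.iSup_maxGenEigenspace_eq_top Q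
  have hind := Module.End.eigenspaces_iSupIndep Q
  have hint : DirectSum.IsInternal fun μ : ℂ => Q.eigenspace μ :=
    DirectSum.isInternal_submodule_of_iSupIndep_of_iSup_eq_top hind htop
  let n : ℂ → ℕ := fun μ => Module.finrank ℂ (Q.eigenspace μ)
  let bs : ∀ μ : ℂ, Module.Basis (Fin (n μ)) ℂ (Q.eigenspace μ) :=
    fun μ => Module.finBasis ℂ _
  let b : Module.Basis (Σ μ : ℂ, Fin (n μ)) ℂ L := hint.collectedBasis bs
  have hbmem : ∀ a : Σ μ : ℂ, Fin (n μ), P (b a) = a.1 • b a := by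
    intro a
    have := hint.collectedBasis_mem bs a
    exact Module.End.mem_eigenspace_iff.mp this
  have hbne : ∀ a : Σ μ : ℂ, Fin (n μ), b a ≠ 0 := fun a => b.ne_zero a
  -- property F
  obtain ⟨i, j, k, hij, hik, hjk, h₁, h₂, h₃⟩ := hF (Σ μ : ℂ, Fin (n μ)) b
  -- key: from each pair, eigenvalues are negatives
  have key : ∀ a c : Σ μ : ℂ, Fin (n μ),
      (⁅b a, ⁅b a, b c⁆⁆ ≠ 0 ∨ ⁅b c, ⁅b c, b a⁆⁆ ≠ 0) → c.1 = -a.1 := by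
    intro a c hac
    have habs : ∀ a : Σ μ : ℂ, Fin (n μ), ‖a.1‖ = 1 :=
      fun a => heig a.1 (b a) (hbne a) (hbmem a)
    have main : ∀ a c : Σ μ : ℂ, Fin (n μ), ⁅b a, ⁅b a, b c⁆⁆ ≠ 0 →
        ‖2 * a.1 + c.1‖ = 1 := by
      intro a c hne
      apply heig (2 * a.1 + c.1) _ hne
      have := hP (b a) (b a) (b c)
      rw [hbmem a, hbmem c] at this
      rw [this]
      simp only [smul_lie, lie_smul]
      module
    rcases hac with hne | hne
    · exact key_complex (habs a) (habs c) (main a c hne)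
    · have := key_complex (habs c) (habs a) (main c a hne)
      linear_combination this
  have e1 : j.1 = -i.1 := key i j h₁
  have e2 : k.1 = -i.1 := key i k h₂
  have e3 : k.1 = -j.1 := key j k h₃
  have hj0 : j.1 = 0 := by
    have hij' : i.1 = j.1 := by linear_combination e2 - e3
    linear_combination (e1 - hij') / 2
  have := heig j.1 (b j) (hbne j) (hbmem j)
  rw [hj0] at this
  simp at this
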